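/- arXiv:2402.04799 — 2 statements merged into one kernel-verified Lean document; each statement's English description precedes it below -/
import Mathlib

section
/- Let V ∈ ℝ^{d×m} and let S ⊆ [m] be such that the column submatrix V_S has full column rank, with |S| < m. Let P_S := V_S (V_S^T V_S)^{-1} V_S^T be the orthogonal projection onto the column span of V_S. Then max_{j∈[m]} det(V_{S∪{j}}^T V_{S∪{j}}) / det(V_S^T V_S) = max_{j∈[m]} ‖(I_d − P_S) v_j‖_2² ≥ tr[(I_d − P_S) V V^T] / (m − |S|), where v_j is the j-th column of V. -/
open Matrix BigOperators

/-- The submatrix of `V` consisting of the columns indexed by `S`. -/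
def cols {d m : ℕ} (V : Matrix (Fin d) (Fin m) ℝ) (S : Finset (Fin m)) :
    Matrix (Fin d) {j // j ∈ S} ℝ :=
  Matrix.of fun i j => V i j

/-- The matrix obtained from `V_S` by appending the column `v_j` (the matrix
`V_{S∪{j}}` of the statement). -/
def appCol {d m : ℕ} (V : Matrix (Fin d) (Fin m) ℝ) (S : Finset (Fin m)) (j : Fin m) :
    Matrix (Fin d) ({k // k ∈ S} ⊕ Unit) ℝ :=
  Matrix.of fun i k => Sum.elim (fun s : {k // k ∈ S} => V i s) (fun _ => V i j) k

/-- The orthogonal projection onto the column span of `V_S`. -/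
noncomputable def projCols {d m : ℕ} (V : Matrix (Fin d) (Fin m) ℝ) (S : Finset (Fin m)) :
    Matrix (Fin d) (Fin d) ℝ :=
  cols V S * ((cols V S)ᵀ * cols V S)⁻¹ * (cols V S)ᵀ

/-- Greedy determinant lower bound: if `V_S` has full column rank, then
`max_j det(V_{S∪{j}}ᵀV_{S∪{j}})/det(V_SᵀV_S) = max_j ‖(I−P_S)v_j‖² ≥
tr[(I−P_S)VVᵀ]/(m−|S|)`. -/
theorem det_avg_lower_bound {d m : ℕ} (V : Matrix (Fin d) (Fin m) ℝ)
    (S : Finset (Fin m)) (hrank : (cols V S).rank = S.card) (hSm : S.card < m) :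
    (⨆ j : Fin m, ((appCol V S j)ᵀ * appCol V S j).det / ((cols V S)ᵀ * cols V S).det)
      = (⨆ j : Fin m, ∑ i, (((1 - projCols V S) *ᵥ fun i => V i j) i) ^ 2) ∧
    (⨆ j : Fin m, ∑ i, (((1 - projCols V S) *ᵥ fun i => V i j) i) ^ 2)
      ≥ Matrix.trace ((1 - projCols V S) * (V * Vᵀ)) / ((m : ℝ) - S.card) := by
  classical
  set A := cols V S with hAdef
  set G := Aᵀ * A with hGdef
  -- invertibility of the Gram matrix
  have hGrank : G.rank = Fintype.card {j // j ∈ S} := by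
    rw [hGdef, Matrix.rank_transpose_mul_self, hrank, Fintype.card_coe]
  have hGunit : IsUnit G := by
    rw [← Matrix.mulVec_surjective_iff_isUnit]
    have hrange : LinearMap.range G.mulVecLin = ⊤ := by
      apply Submodule.eq_top_of_finrank_eq
      rw [← Matrix.rank, hGrank, Module.finrank_fintype_fun_eq_card]
    intro v
    obtain ⟨u, hu⟩ := LinearMap.range_eq_top.mp hrange v
    exact ⟨u, hu⟩
  have hGdet : IsUnit G.det := (Matrix.isUnit_iff_isUnit_det G).mp hGunit
  have hGdetne : G.det ≠ 0 := hGdet.ne_zero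
  haveI : Invertible G := G.invertibleOfIsUnitDet hGdet
  have hGinv : ⅟G = G⁻¹ := Matrix.invOf_eq_nonsing_inv G
  have hinvmul : G⁻¹ * G = 1 := Matrix.nonsing_inv_mul G hGdet
  have hGsym : Gᵀ = G := by rw [hGdef]; simp [Matrix.transpose_mul]
  have hPdef : projCols V S = A * G⁻¹ * Aᵀ := rfl
  have hPA : projCols V S * A = A := by
    rw [hPdef, Matrix.mul_assoc (A * G⁻¹), ← hGdef, Matrix.mul_assoc, hinvmul, Matrix.mul_one]
  have hPsym : (projCols V S)ᵀ = projCols V S := by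
    rw [hPdef]
    simp [Matrix.transpose_mul, Matrix.transpose_nonsing_inv, hGsym, Matrix.mul_assoc]
  have hPP : projCols V S * projCols V S = projCols V S := by
    nth_rewrite 2 [hPdef]
    rw [← Matrix.mul_assoc, ← Matrix.mul_assoc, hPA, ← hPdef]
  set Q := 1 - projCols V S with hQdef
  have hQsym : Qᵀ = Q := by rw [hQdef, Matrix.transpose_sub, Matrix.transpose_one, hPsym]
  have hQQ : Q * Q = Q := by
    have h : Q * Q = 1 - projCols V S - projCols V S + projCols V S * projCols V S := by
      rw [hQdef]; noncomm_ring
    rw [h, hPP, hQdef]; abel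
  have hQA : Q * A = 0 := by
    rw [hQdef, Matrix.sub_mul, Matrix.one_mul, hPA, sub_self]
  -- scalar lemma
  have hvm : ∀ v : Fin d → ℝ, v ᵥ* Q = Q *ᵥ v := by
    intro v
    conv_lhs => rw [← hQsym]
    rw [Matrix.vecMul_transpose]
  have hscal : ∀ w : Fin d → ℝ, ∑ i, ((Q *ᵥ w) i) ^ 2 = w ⬝ᵥ (Q *ᵥ w) := by
    intro w
    have h1 : ∑ i, ((Q *ᵥ w) i) ^ 2 = (Q *ᵥ w) ⬝ᵥ (Q *ᵥ w) := by
      simp [dotProduct, sq]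
    rw [h1, Matrix.dotProduct_mulVec, hvm, Matrix.mulVec_mulVec, hQQ, dotProduct_comm]
  -- per-j determinant identity
  have hdet : ∀ j : Fin m, ((appCol V S j)ᵀ * appCol V S j).det
      = G.det * ((fun i => V i j) ⬝ᵥ (Q *ᵥ fun i => V i j)) := by
    intro j
    set w : Fin d → ℝ := fun i => V i j with hw
    have happ : appCol V S j = Matrix.fromCols A (Matrix.replicateCol Unit w) := by
      ext i k
      cases k <;> rfl
    have hblk : (appCol V S j)ᵀ * appCol V S j
        = Matrix.fromBlocks G (Aᵀ * Matrix.replicateCol Unit w)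
            ((Matrix.replicateCol Unit w)ᵀ * A) ((Matrix.replicateCol Unit w)ᵀ * Matrix.replicateCol Unit w) := by
      rw [happ, Matrix.transpose_fromCols, Matrix.fromRows_mul_fromCols, hGdef]
    rw [hblk, Matrix.det_fromBlocks₁₁]
    congr 1
    rw [Matrix.det_unique]
    have h3 : (Matrix.replicateCol Unit w)ᵀ * A * ⅟G * (Aᵀ * Matrix.replicateCol Unit w)
        = (Matrix.replicateCol Unit w)ᵀ * (projCols V S * Matrix.replicateCol Unit w) := by
      rw [hGinv, hPdef]
      simp only [Matrix.mul_assoc]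
    rw [Matrix.sub_apply, h3]
    have hD : ((Matrix.replicateCol Unit w)ᵀ * Matrix.replicateCol Unit w) default default = w ⬝ᵥ w := by
      simp [Matrix.mul_apply, Matrix.replicateCol, dotProduct]
    have hC : ((Matrix.replicateCol Unit w)ᵀ * (projCols V S * Matrix.replicateCol Unit w)) default default
        = w ⬝ᵥ (projCols V S *ᵥ w) := by
      simp [Matrix.mul_apply, Matrix.replicateCol, dotProduct, Matrix.mulVec]
    rw [hD, hC, hQdef, Matrix.sub_mulVec, Matrix.one_mulVec, dotProduct_sub]
  -- each term of the left sup equals the corresponding term of the right sup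
  have hterm : ∀ j : Fin m, ((appCol V S j)ᵀ * appCol V S j).det / G.det
      = ∑ i, ((Q *ᵥ fun i => V i j) i) ^ 2 := by
    intro j
    rw [hdet j, mul_comm, mul_div_assoc, div_self hGdetne, mul_one, ← hscal]
  have m0 : 0 < m := lt_of_le_of_lt (Nat.zero_le _) hSm
  haveI : Nonempty (Fin m) := ⟨⟨0, m0⟩⟩
  set f : Fin m → ℝ := fun j => ∑ i, ((Q *ᵥ fun i => V i j) i) ^ 2 with hf
  constructor
  · exact iSup_congr hterm
  · -- trace equals the sum of f over all columns
    have hbdd : BddAbove (Set.range f) := (Set.finite_range f).bddAbove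
    have hfle : ∀ j, f j ≤ ⨆ j, f j := fun j => le_ciSup hbdd j
    have htr : Matrix.trace (Q * (V * Vᵀ)) = ∑ j, f j := by
      rw [← Matrix.mul_assoc, Matrix.trace_mul_comm, Matrix.trace]
      refine Finset.sum_congr rfl fun j _ => ?_
      rw [hf]
      simp only [hscal]
      simp [Matrix.diag, Matrix.mul_apply, Matrix.mulVec, dotProduct,
        Finset.mul_sum]
    have hS0 : ∀ j ∈ S, f j = 0 := by
      intro j hj
      have hcol : (Q *ᵥ fun i => V i j) = fun i => (Q * A) i ⟨j, hj⟩ := by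
        funext i
        simp [Matrix.mulVec, Matrix.mul_apply, dotProduct, hAdef, cols]
      rw [hf]
      simp [hcol, hQA]
    have hsum : Matrix.trace (Q * (V * Vᵀ)) = ∑ j ∈ Sᶜ, f j := by
      rw [htr, ← Finset.sum_compl_add_sum S f, Finset.sum_eq_zero hS0, add_zero]
    have hc : (0 : ℝ) < (m : ℝ) - S.card := by
      rw [sub_pos]
      exact_mod_cast hSm
    rw [ge_iff_le, div_le_iff₀ hc]
    calc Matrix.trace (Q * (V * Vᵀ)) = ∑ j ∈ Sᶜ, f j := hsum
      _ ≤ ∑ _j ∈ Sᶜ, ⨆ j, f j := Finset.sum_le_sum fun j _ => hfle j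
      _ = (Sᶜ.card : ℝ) * ⨆ j, f j := by rw [Finset.sum_const, nsmul_eq_mul]
      _ = (⨆ j, f j) * ((m : ℝ) - S.card) := by
          rw [Finset.card_compl, Fintype.card_fin, Nat.cast_sub hSm.le, mul_comm]
end

section
/- Let A ∈ ℝ^{m×n} be entrywise nonnegative with every row containing a positive entry, let r ∈ ℝ^m be positive, c ∈ ℝ^n, and y ∈ ℝ^n positive. Define the induced column sums c^{A,r}_j(y) := Σ_{i∈[m]} r_i · A_{ij} y_j / (Σ_{k∈[n]} A_{ik} y_k). Let T ⊆ [n] have margin γ ≥ 0 (witnessed by threshold ν): max_{j∈T}(c^{A,r}_j(y) − c_j) ≤ ν − γ and ν + γ ≤ min_{j∉T}(c^{A,r}_j(y) − c_j). Let h(α) := Σ_{j∈T} c^{A,r}_j(y ∘ (1_{T^c} + α·1_T)). Then for any α ≥ 1 with 0 ≤ h(α) − h(1) ≤ γ, the scaling y' := y ∘ (1_{T^c} + α·1_T) satisfies ‖c^{A,r}(y) − c‖_2² − ‖c^{A,r}(y') − c‖_2² ≥ 2γ·(h(α) − h(1)). -/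
open BigOperators

/-- The induced column sums of the matrix-scaling problem:
`c^{A,r}_j(y) = Σ_i r_i · A_{ij} y_j / (Σ_k A_{ik} y_k)`. -/
noncomputable def colsum {m n : ℕ} (A : Matrix (Fin m) (Fin n) ℝ) (r : Fin m → ℝ)
    (y : Fin n → ℝ) (j : Fin n) : ℝ :=
  ∑ i, r i * (A i j * y j / ∑ k, A i k * y k)

/-- `scale y T α = y ∘ (1_{Tᶜ} + α·1_T)`. -/
def scale {n : ℕ} (y : Fin n → ℝ) (T : Finset (Fin n)) (α : ℝ) : Fin n → ℝ :=
  fun j => if j ∈ T then α * y j else y j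

/-- The matrix-scaling proxy function `h(α) = Σ_{j∈T} c^{A,r}_j(y ∘ (1_{Tᶜ} + α·1_T))`. -/
noncomputable def proxym {m n : ℕ} (A : Matrix (Fin m) (Fin n) ℝ) (r : Fin m → ℝ)
    (y : Fin n → ℝ) (T : Finset (Fin n)) (α : ℝ) : ℝ :=
  ∑ j ∈ T, colsum A r (scale y T α) j

lemma my_denom_pos {m n : ℕ} (A : Matrix (Fin m) (Fin n) ℝ) (hA : ∀ i j, 0 ≤ A i j)
    (hrow : ∀ i, ∃ j, 0 < A i j) (y : Fin n → ℝ) (hy : ∀ j, 0 < y j) (i : Fin m) :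
    0 < ∑ k, A i k * y k := by
  obtain ⟨j, hj⟩ := hrow i
  exact Finset.sum_pos' (fun k _ => mul_nonneg (hA i k) (hy k).le)
    ⟨j, Finset.mem_univ j, mul_pos hj (hy j)⟩

lemma my_colsum_total {m n : ℕ} (A : Matrix (Fin m) (Fin n) ℝ) (hA : ∀ i j, 0 ≤ A i j)
    (hrow : ∀ i, ∃ j, 0 < A i j) (r : Fin m → ℝ) (y : Fin n → ℝ) (hy : ∀ j, 0 < y j) :
    ∑ j, colsum A r y j = ∑ i, r i := by
  unfold colsum
  rw [Finset.sum_comm]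
  refine Finset.sum_congr rfl fun i _ => ?_
  rw [← Finset.mul_sum, ← Finset.sum_div, div_self (my_denom_pos A hA hrow y hy i).ne', mul_one]

lemma my_scale_one {n : ℕ} (y : Fin n → ℝ) (T : Finset (Fin n)) : scale y T 1 = y := by
  funext j; simp [scale]

lemma my_sum_sq_le {ι : Type*} (s : Finset ι) (f : ι → ℝ) (hf : ∀ i ∈ s, 0 ≤ f i) :
    ∑ i ∈ s, f i ^ 2 ≤ (∑ i ∈ s, f i) ^ 2 := by
  calc ∑ i ∈ s, f i ^ 2 ≤ ∑ i ∈ s, f i * ∑ j ∈ s, f j :=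
        Finset.sum_le_sum fun i hi => by
          rw [sq]; exact mul_le_mul_of_nonneg_left (Finset.single_le_sum hf hi) (hf i hi)
    _ = (∑ i ∈ s, f i) ^ 2 := by rw [sq, ← Finset.sum_mul]

lemma my_scale_pos {n : ℕ} (y : Fin n → ℝ) (hy : ∀ j, 0 < y j) (T : Finset (Fin n))
    (α : ℝ) (hα : 1 ≤ α) : ∀ j, 0 < scale y T α j := by
  intro j; unfold scale; split
  · exact mul_pos (lt_of_lt_of_le one_pos hα) (hy j)
  · exact hy j

lemma my_scale_ge {n : ℕ} (y : Fin n → ℝ) (hy : ∀ j, 0 < y j) (T : Finset (Fin n))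
    (α : ℝ) (hα : 1 ≤ α) : ∀ j, y j ≤ scale y T α j := by
  intro j; unfold scale; split
  · nlinarith [(hy j).le]
  · exact le_rfl

lemma my_scale_le {n : ℕ} (y : Fin n → ℝ) (hy : ∀ j, 0 < y j) (T : Finset (Fin n))
    (α : ℝ) (hα : 1 ≤ α) : ∀ j, scale y T α j ≤ α * y j := by
  intro j; unfold scale; split
  · exact le_rfl
  · nlinarith [(hy j).le]

lemma my_colsum_mono_in {m n : ℕ} (A : Matrix (Fin m) (Fin n) ℝ) (hA : ∀ i j, 0 ≤ A i j)
    (hrow : ∀ i, ∃ j, 0 < A i j) (r : Fin m → ℝ) (hr : ∀ i, 0 < r i)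
    (y : Fin n → ℝ) (hy : ∀ j, 0 < y j) (T : Finset (Fin n)) (α : ℝ) (hα : 1 ≤ α)
    (j : Fin n) (hj : j ∈ T) : colsum A r y j ≤ colsum A r (scale y T α) j := by
  unfold colsum
  refine Finset.sum_le_sum fun i _ => ?_
  have hD : 0 < ∑ k, A i k * y k := my_denom_pos A hA hrow y hy i
  have hD' : 0 < ∑ k, A i k * scale y T α k :=
    my_denom_pos A hA hrow _ (my_scale_pos y hy T α hα) i
  have hDle : ∑ k, A i k * scale y T α k ≤ α * ∑ k, A i k * y k := by
    rw [Finset.mul_sum]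
    refine Finset.sum_le_sum fun k _ => ?_
    rw [mul_left_comm]
    exact mul_le_mul_of_nonneg_left (my_scale_le y hy T α hα k) (hA i k)
  have hs : scale y T α j = α * y j := by simp [scale, hj]
  refine mul_le_mul_of_nonneg_left ?_ (hr i).le
  rw [hs, div_le_div_iff₀ hD hD']
  have hnn : 0 ≤ A i j * y j := mul_nonneg (hA i j) (hy j).le
  calc A i j * y j * ∑ k, A i k * scale y T α k
      ≤ A i j * y j * (α * ∑ k, A i k * y k) := mul_le_mul_of_nonneg_left hDle hnn
    _ = A i j * (α * y j) * ∑ k, A i k * y k := by ring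

lemma my_colsum_mono_out {m n : ℕ} (A : Matrix (Fin m) (Fin n) ℝ) (hA : ∀ i j, 0 ≤ A i j)
    (hrow : ∀ i, ∃ j, 0 < A i j) (r : Fin m → ℝ) (hr : ∀ i, 0 < r i)
    (y : Fin n → ℝ) (hy : ∀ j, 0 < y j) (T : Finset (Fin n)) (α : ℝ) (hα : 1 ≤ α)
    (j : Fin n) (hj : j ∉ T) : colsum A r (scale y T α) j ≤ colsum A r y j := by
  unfold colsum
  refine Finset.sum_le_sum fun i _ => ?_
  have hD : 0 < ∑ k, A i k * y k := my_denom_pos A hA hrow y hy i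
  have hDle : ∑ k, A i k * y k ≤ ∑ k, A i k * scale y T α k :=
    Finset.sum_le_sum fun k _ =>
      mul_le_mul_of_nonneg_left (my_scale_ge y hy T α hα k) (hA i k)
  have hs : scale y T α j = y j := by simp [scale, hj]
  refine mul_le_mul_of_nonneg_left ?_ (hr i).le
  rw [hs]
  gcongr
  exact mul_nonneg (hA i j) (hy j).le

/-- Matrix-scaling progress lemma: if `T` has margin `γ` (witnessed by `ν`) and
`α ≥ 1` satisfies `0 ≤ h(α) − h(1) ≤ γ`, then scaling up `T` by `α` decreases the
squared column-sum error by at least `2γ(h(α) − h(1))`. -/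
theorem matrix_progress_lemma {m n : ℕ} (A : Matrix (Fin m) (Fin n) ℝ)
    (hA : ∀ i j, 0 ≤ A i j) (hrow : ∀ i, ∃ j, 0 < A i j)
    (r : Fin m → ℝ) (hr : ∀ i, 0 < r i) (c : Fin n → ℝ)
    (y : Fin n → ℝ) (hy : ∀ j, 0 < y j)
    (T : Finset (Fin n)) (γ ν : ℝ) (hγ : 0 ≤ γ)
    (hmargin₁ : ∀ j ∈ T, colsum A r y j - c j ≤ ν - γ)
    (hmargin₂ : ∀ j ∉ T, ν + γ ≤ colsum A r y j - c j)
    (α : ℝ) (hα : 1 ≤ α)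
    (h0 : 0 ≤ proxym A r y T α - proxym A r y T 1)
    (h1 : proxym A r y T α - proxym A r y T 1 ≤ γ) :
    (∑ j, (colsum A r y j - c j) ^ 2)
        - (∑ j, (colsum A r (scale y T α) j - c j) ^ 2)
      ≥ 2 * γ * (proxym A r y T α - proxym A r y T 1) := by
  set c1 : Fin n → ℝ := colsum A r y with hc1
  set c2 : Fin n → ℝ := colsum A r (scale y T α) with hc2
  set e : Fin n → ℝ := fun j => c2 j - c1 j with he
  set δ : ℝ := ∑ j ∈ T, e j with hδ
  -- the proxy difference equals δ
  have hprox : proxym A r y T α - proxym A r y T 1 = δ := by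
    unfold proxym
    rw [my_scale_one, ← Finset.sum_sub_distrib]
  rw [hprox] at h0 h1 ⊢
  -- conservation of total mass
  have htot : ∑ j, e j = 0 := by
    rw [Finset.sum_sub_distrib]
    rw [hc1, hc2, my_colsum_total A hA hrow r y hy,
      my_colsum_total A hA hrow r _ (my_scale_pos y hy T α hα), sub_self]
  have hcompl : ∑ j ∈ Tᶜ, e j = -δ := by
    have := Finset.sum_add_sum_compl T e
    rw [htot] at this
    linarith [this]
  -- sign of e
  have hein : ∀ j ∈ T, 0 ≤ e j := fun j hj =>
    sub_nonneg.mpr (my_colsum_mono_in A hA hrow r hr y hy T α hα j hj)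
  have heout : ∀ j ∈ Tᶜ, e j ≤ 0 := fun j hj =>
    sub_nonpos.mpr (my_colsum_mono_out A hA hrow r hr y hy T α hα j (Finset.mem_compl.mp hj))
  -- cross-term bounds
  have hcross1 : ∑ j ∈ T, (c1 j - c j) * e j ≤ (ν - γ) * δ := by
    rw [hδ, Finset.mul_sum]
    exact Finset.sum_le_sum fun j hj =>
      mul_le_mul_of_nonneg_right (hmargin₁ j hj) (hein j hj)
  have hcross2 : ∑ j ∈ Tᶜ, (c1 j - c j) * e j ≤ (ν + γ) * (-δ) := by
    rw [← hcompl, Finset.mul_sum]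
    exact Finset.sum_le_sum fun j hj =>
      mul_le_mul_of_nonpos_right (hmargin₂ j (Finset.mem_compl.mp hj)) (heout j hj)
  -- square-term bounds
  have hsq1 : ∑ j ∈ T, e j ^ 2 ≤ δ ^ 2 := my_sum_sq_le T e hein
  have hsq2 : ∑ j ∈ Tᶜ, e j ^ 2 ≤ δ ^ 2 := by
    calc ∑ j ∈ Tᶜ, e j ^ 2 = ∑ j ∈ Tᶜ, (-e j) ^ 2 := by simp
      _ ≤ (∑ j ∈ Tᶜ, -e j) ^ 2 :=
          my_sum_sq_le Tᶜ (fun j => -e j) (fun j hj => neg_nonneg.mpr (heout j hj))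
      _ = δ ^ 2 := by rw [Finset.sum_neg_distrib, hcompl, neg_neg]
  -- the algebraic identity
  have hid : (∑ j, (c1 j - c j) ^ 2) - (∑ j, (c2 j - c j) ^ 2)
      = -2 * (∑ j, (c1 j - c j) * e j) - ∑ j, e j ^ 2 := by
    rw [Finset.mul_sum, ← Finset.sum_sub_distrib, ← Finset.sum_sub_distrib]
    refine Finset.sum_congr rfl fun j _ => ?_
    simp only [he]; ring
  have hsplit1 : ∑ j, (c1 j - c j) * e j
      = (∑ j ∈ T, (c1 j - c j) * e j) + ∑ j ∈ Tᶜ, (c1 j - c j) * e j :=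
    (Finset.sum_add_sum_compl T _).symm
  have hsplit2 : ∑ j, e j ^ 2 = (∑ j ∈ T, e j ^ 2) + ∑ j ∈ Tᶜ, e j ^ 2 :=
    (Finset.sum_add_sum_compl T _).symm
  rw [ge_iff_le, hid, hsplit1, hsplit2]
  nlinarith [mul_le_mul_of_nonneg_left h1 h0]
end
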